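/- arXiv:2605.12136 — 3 statements merged into one kernel-verified Lean document; each statement's English description precedes it below -/
import Mathlib

section
/- Let J be a positive integer and let K ⊆ ℝ^J be nonempty, closed, and convex. Suppose A_n are symmetric positive definite J×J real matrices converging entrywise to a symmetric positive definite matrix A, and x_n → x in ℝ^J. Then Π_{K,A_n} x_n → Π_{K,A} x, where Π_{K,B} z denotes the unique minimizer of (z − λ)ᵀB(z − λ) over λ ∈ K. -/
open Matrix Filter Topology

lemma dot_abs_le (J : ℕ) (B : Matrix (Fin J) (Fin J) ℝ) (v w : Fin J → ℝ) :
    |v ⬝ᵥ B.mulVec w| ≤ (∑ i, ∑ j, |B i j|) * ‖v‖ * ‖w‖ := by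
  have h1 : v ⬝ᵥ B.mulVec w = ∑ i, ∑ j, v i * (B i j * w j) := by
    simp [dotProduct, Matrix.mulVec, Finset.mul_sum]
  rw [h1]
  calc |∑ i, ∑ j, v i * (B i j * w j)| ≤ ∑ i, ∑ j, |v i * (B i j * w j)| := by
        refine (Finset.abs_sum_le_sum_abs _ _).trans ?_
        exact Finset.sum_le_sum fun i _ => Finset.abs_sum_le_sum_abs _ _
    _ ≤ ∑ i, ∑ j, |B i j| * ‖v‖ * ‖w‖ := by
        refine Finset.sum_le_sum fun i _ => Finset.sum_le_sum fun j _ => ?_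
        rw [abs_mul, abs_mul]
        have hv : |v i| ≤ ‖v‖ := by
          simpa [Real.norm_eq_abs] using norm_le_pi_norm v i
        have hw : |w j| ≤ ‖w‖ := by
          simpa [Real.norm_eq_abs] using norm_le_pi_norm w j
        have h2 : |v i| * (|B i j| * |w j|) ≤ ‖v‖ * (|B i j| * ‖w‖) :=
          mul_le_mul hv (mul_le_mul_of_nonneg_left hw (abs_nonneg _)) (by positivity) (norm_nonneg _)
        nlinarith [h2]
    _ = (∑ i, ∑ j, |B i j|) * ‖v‖ * ‖w‖ := by
        rw [Finset.sum_mul, Finset.sum_mul]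
        refine Finset.sum_congr rfl fun i _ => ?_
        rw [Finset.sum_mul, Finset.sum_mul]

lemma posdef_coercive (J : ℕ) (hJ : 0 < J) (B : Matrix (Fin J) (Fin J) ℝ) (hB : B.PosDef) :
    ∃ μ > 0, ∀ v : Fin J → ℝ, μ * ‖v‖ ^ 2 ≤ v ⬝ᵥ B.mulVec v := by
  haveI : Nonempty (Fin J) := ⟨⟨0, hJ⟩⟩
  have hpos : ∀ v : Fin J → ℝ, v ≠ 0 → 0 < v ⬝ᵥ B.mulVec v := by
    intro v hv
    simpa using hB.dotProduct_mulVec_pos hv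
  have hcont : Continuous fun v : Fin J → ℝ => v ⬝ᵥ B.mulVec v := by
    simp only [dotProduct, Matrix.mulVec]
    exact continuous_finset_sum _ fun i _ =>
      (continuous_apply i).mul
        (continuous_finset_sum _ fun j _ => continuous_const.mul (continuous_apply j))
  have hne : (Metric.sphere (0 : Fin J → ℝ) 1).Nonempty :=
    NormedSpace.sphere_nonempty.mpr zero_le_one
  obtain ⟨u, huS, hmin⟩ := (isCompact_sphere (0 : Fin J → ℝ) 1).exists_isMinOn hne
    hcont.continuousOn
  have hun : ‖u‖ = 1 := by simpa using mem_sphere_zero_iff_norm.mp huS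
  have hu0 : u ≠ 0 := by
    intro h; rw [h] at hun; simp at hun
  refine ⟨u ⬝ᵥ B.mulVec u, hpos u hu0, fun v => ?_⟩
  rcases eq_or_ne v 0 with rfl | hv
  · simp
  · have hnv : 0 < ‖v‖ := norm_pos_iff.mpr hv
    set c : ℝ := ‖v‖ with hc
    have hwS : (c⁻¹ • v) ∈ Metric.sphere (0 : Fin J → ℝ) 1 := by
      rw [mem_sphere_zero_iff_norm, norm_smul, norm_inv, norm_norm]
      field_simp
    have hle := isMinOn_iff.mp hmin _ hwS
    have hQ : (c⁻¹ • v) ⬝ᵥ B.mulVec (c⁻¹ • v) = c⁻¹ * (c⁻¹ * (v ⬝ᵥ B.mulVec v)) := by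
      rw [Matrix.mulVec_smul, dotProduct_smul, smul_dotProduct]
      simp [smul_eq_mul]
    rw [hQ] at hle
    have h2 : (u ⬝ᵥ B.mulVec u) * c ^ 2 ≤ v ⬝ᵥ B.mulVec v := by
      have h3 := mul_le_mul_of_nonneg_left hle (le_of_lt (by positivity : (0:ℝ) < c ^ 2))
      have h4 : c ^ 2 * (c⁻¹ * (c⁻¹ * (v ⬝ᵥ B.mulVec v))) = v ⬝ᵥ B.mulVec v := by
        field_simp
      nlinarith [h3, h4]
    linarith [h2]

lemma quad_parallelogram (J : ℕ) (B : Matrix (Fin J) (Fin J) ℝ) (u w : Fin J → ℝ) :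
    u ⬝ᵥ B.mulVec u + w ⬝ᵥ B.mulVec w =
      2 * (((1/2 : ℝ) • (u + w)) ⬝ᵥ B.mulVec ((1/2 : ℝ) • (u + w)))
      + 2 * (((1/2 : ℝ) • (u - w)) ⬝ᵥ B.mulVec ((1/2 : ℝ) • (u - w))) := by
  simp only [Matrix.mulVec_smul, dotProduct_smul, smul_dotProduct,
    Matrix.mulVec_add, Matrix.mulVec_sub, dotProduct_add, dotProduct_sub,
    add_dotProduct, sub_dotProduct, smul_eq_mul]
  ring

lemma strong_min (J : ℕ) (B : Matrix (Fin J) (Fin J) ℝ) (K : Set (Fin J → ℝ))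
    (hKconv : Convex ℝ K) (y q : Fin J → ℝ) (hqK : q ∈ K)
    (hqmin : ∀ l ∈ K, (y - q) ⬝ᵥ B.mulVec (y - q) ≤ (y - l) ⬝ᵥ B.mulVec (y - l))
    (l : Fin J → ℝ) (hl : l ∈ K) :
    (1/2 : ℝ) * ((l - q) ⬝ᵥ B.mulVec (l - q)) ≤
      (y - l) ⬝ᵥ B.mulVec (y - l) - (y - q) ⬝ᵥ B.mulVec (y - q) := by
  have hm : (1/2 : ℝ) • q + (1/2 : ℝ) • l ∈ K :=
    hKconv hqK hl (by norm_num) (by norm_num) (by norm_num)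
  have hid := quad_parallelogram J B (y - q) (y - l)
  have e1 : (1/2 : ℝ) • ((y - q) + (y - l)) = y - ((1/2 : ℝ) • q + (1/2 : ℝ) • l) := by
    ext i; simp [smul_eq_mul]; try ring
  have e2 : (1/2 : ℝ) • ((y - q) - (y - l)) = (1/2 : ℝ) • (l - q) := by
    ext i; simp [smul_eq_mul]; try ring
  rw [e1, e2] at hid
  have hq4 : ((1/2 : ℝ) • (l - q)) ⬝ᵥ B.mulVec ((1/2 : ℝ) • (l - q)) =
      (1/4 : ℝ) * ((l - q) ⬝ᵥ B.mulVec (l - q)) := by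
    rw [Matrix.mulVec_smul, dotProduct_smul, smul_dotProduct]
    simp [smul_eq_mul]; ring
  rw [hq4] at hid
  have hmin := hqmin _ hm
  linarith [hmin, hid]

lemma tendsto_quad (J : ℕ) (A : ℕ → Matrix (Fin J) (Fin J) ℝ) (Alim : Matrix (Fin J) (Fin J) ℝ)
    (hAconv : ∀ i j, Tendsto (fun n => A n i j) atTop (𝓝 (Alim i j)))
    (y : ℕ → Fin J → ℝ) (ylim : Fin J → ℝ)
    (hy : ∀ i, Tendsto (fun n => y n i) atTop (𝓝 (ylim i))) :
    Tendsto (fun n => y n ⬝ᵥ (A n).mulVec (y n)) atTop (𝓝 (ylim ⬝ᵥ Alim.mulVec ylim)) := by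
  simp only [dotProduct, Matrix.mulVec]
  exact tendsto_finset_sum _ fun i _ =>
    (hy i).mul (tendsto_finset_sum _ fun j _ => (hAconv i j).mul (hy j))

set_option maxHeartbeats 1000000 in
/-- Joint continuity of the `A`-metric projection onto a nonempty closed convex
set `K`: if symmetric positive definite matrices `Aₙ` converge entrywise to a
symmetric positive definite `A` and `xₙ → x`, then the (unique) minimizers
`pₙ` of `(xₙ − λ)ᵀAₙ(xₙ − λ)` over `K` converge to the (unique) minimizer `q`
of `(x − λ)ᵀA(x − λ)` over `K`. -/
theorem metric_projection_jointly_continuous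
    (J : ℕ) (hJ : 0 < J)
    (K : Set (Fin J → ℝ))
    (hKne : K.Nonempty) (hKcl : IsClosed K) (hKconv : Convex ℝ K)
    (A : ℕ → Matrix (Fin J) (Fin J) ℝ)
    (Alim : Matrix (Fin J) (Fin J) ℝ)
    (hAsymm : ∀ n, (A n).IsSymm) (hApd : ∀ n, (A n).PosDef)
    (hAlimsymm : Alim.IsSymm) (hAlimpd : Alim.PosDef)
    (hAconv : ∀ i j, Tendsto (fun n => A n i j) atTop (𝓝 (Alim i j)))
    (x : ℕ → Fin J → ℝ) (xlim : Fin J → ℝ)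
    (hx : Tendsto x atTop (𝓝 xlim))
    (p : ℕ → Fin J → ℝ)
    (hp : ∀ n, p n ∈ K ∧
      ∀ l ∈ K, (x n - p n) ⬝ᵥ (A n).mulVec (x n - p n)
                ≤ (x n - l) ⬝ᵥ (A n).mulVec (x n - l))
    (q : Fin J → ℝ)
    (hq : q ∈ K ∧
      ∀ l ∈ K, (xlim - q) ⬝ᵥ Alim.mulVec (xlim - q)
                ≤ (xlim - l) ⬝ᵥ Alim.mulVec (xlim - l)) :
    Tendsto p atTop (𝓝 q) := by
  obtain ⟨hqK, hqmin⟩ := hq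
  obtain ⟨μ, hμ, hcoer⟩ := posdef_coercive J hJ Alim hAlimpd
  set SA : ℝ := ∑ i, ∑ j, |Alim i j| with hSAdef
  have hSA0 : 0 ≤ SA :=
    Finset.sum_nonneg fun i _ => Finset.sum_nonneg fun j _ => abs_nonneg _
  set c : ℕ → ℝ := fun n => ∑ i, ∑ j, |A n i j - Alim i j| with hcdef
  have hc0 : ∀ n, 0 ≤ c n := fun n =>
    Finset.sum_nonneg fun i _ => Finset.sum_nonneg fun j _ => abs_nonneg _
  have hc : Tendsto c atTop (𝓝 0) := by
    have h : Tendsto (fun n => ∑ i : Fin J, ∑ j : Fin J, |A n i j - Alim i j|) atTop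
        (𝓝 (∑ i : Fin J, ∑ j : Fin J, |Alim i j - Alim i j|)) :=
      tendsto_finset_sum _ fun i _ => tendsto_finset_sum _ fun j _ =>
        ((hAconv i j).sub tendsto_const_nhds).abs
    simpa using h
  have hxc : ∀ i, Tendsto (fun n => x n i) atTop (𝓝 (xlim i)) := fun i =>
    tendsto_pi_nhds.mp hx i
  set e : ℕ → ℝ := fun n => ‖x n - xlim‖ with hedef
  have he : Tendsto e atTop (𝓝 0) := tendsto_iff_norm_sub_tendsto_zero.mp hx
  have he0 : ∀ n, 0 ≤ e n := fun n => norm_nonneg _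
  set Fq : ℝ := (xlim - q) ⬝ᵥ Alim.mulVec (xlim - q) with hFqdef
  have hfq : Tendsto (fun n => (x n - q) ⬝ᵥ (A n).mulVec (x n - q)) atTop (𝓝 Fq) := by
    refine tendsto_quad J A Alim hAconv _ _ (fun i => ?_)
    simpa using (hxc i).sub_const (q i)
  -- uniform eventual coercivity for A n
  have hAn_coer : ∀ᶠ n in atTop, ∀ v : Fin J → ℝ,
      μ / 2 * ‖v‖ ^ 2 ≤ v ⬝ᵥ (A n).mulVec v := by
    filter_upwards [hc.eventually_lt_const (half_pos hμ)] with n hn v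
    have hdiff : v ⬝ᵥ (A n).mulVec v - v ⬝ᵥ Alim.mulVec v
        = v ⬝ᵥ (A n - Alim).mulVec v := by
      rw [Matrix.sub_mulVec, dotProduct_sub]
    have hb := dot_abs_le J (A n - Alim) v v
    have hbb : |v ⬝ᵥ (A n - Alim).mulVec v| ≤ c n * ‖v‖ * ‖v‖ := by
      simpa [Matrix.sub_apply, hcdef] using hb
    have hco := hcoer v
    have hsq : ‖v‖ * ‖v‖ = ‖v‖ ^ 2 := (sq ‖v‖).symm
    have hmul : c n * ‖v‖ ^ 2 ≤ μ / 2 * ‖v‖ ^ 2 :=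
      mul_le_mul_of_nonneg_right hn.le (sq_nonneg _)
    have habs := abs_le.mp hbb
    nlinarith [habs.1, habs.2, hco, hmul, hdiff]
  have hFq0 : 0 ≤ Fq := le_trans (by positivity) (hcoer (xlim - q))
  have hfq_lt : ∀ᶠ n in atTop,
      (x n - q) ⬝ᵥ (A n).mulVec (x n - q) < Fq + 1 :=
    hfq.eventually_lt_const (lt_add_one Fq)
  set R2 : ℝ := 2 / μ * (Fq + 1) with hR2def
  have hR20 : 0 ≤ R2 := by
    have : (0:ℝ) < Fq + 1 := by linarith
    positivity
  set R : ℝ := Real.sqrt R2 with hRdef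
  have hR0 : 0 ≤ R := Real.sqrt_nonneg _
  have hvbound : ∀ᶠ n in atTop, ‖x n - p n‖ ≤ R ∧ ‖x n - p n‖ ^ 2 ≤ R2 := by
    filter_upwards [hAn_coer, hfq_lt] with n h1 h2
    have h3 := (hp n).2 q hqK
    have h4 := h1 (x n - p n)
    have h5 : ‖x n - p n‖ ^ 2 ≤ R2 := by
      have hlt : μ / 2 * ‖x n - p n‖ ^ 2 < Fq + 1 := lt_of_le_of_lt (h4.trans h3) h2
      have hmm := mul_le_mul_of_nonneg_left hlt.le
        (le_of_lt (by positivity : (0:ℝ) < 2 / μ))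
      have heq : 2 / μ * (μ / 2 * ‖x n - p n‖ ^ 2) = ‖x n - p n‖ ^ 2 := by
        field_simp
      rw [heq] at hmm
      exact hmm
    refine ⟨?_, h5⟩
    have := Real.sqrt_le_sqrt h5
    rwa [Real.sqrt_sq (norm_nonneg _)] at this
  -- the error term
  have herr : ∀ᶠ n in atTop,
      |(xlim - p n) ⬝ᵥ Alim.mulVec (xlim - p n)
        - (x n - p n) ⬝ᵥ (A n).mulVec (x n - p n)|
      ≤ SA * e n * (2 * R + 1) + c n * R2 := by
    filter_upwards [hvbound, he.eventually_lt_const one_pos] with n hv hen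
    obtain ⟨hv1, hv2⟩ := hv
    set u : Fin J → ℝ := xlim - p n with hudef
    set v : Fin J → ℝ := x n - p n with hvdef
    have hDnorm : ‖u - v‖ = e n := by
      have : u - v = xlim - x n := by ext i; simp [hudef, hvdef]; try ring
      rw [this, hedef]
      exact norm_sub_rev _ _
    have hunorm : ‖u‖ ≤ R + 1 := by
      have : u = (u - v) + v := by ring
      calc ‖u‖ = ‖(u - v) + v‖ := by rw [← this]
        _ ≤ ‖u - v‖ + ‖v‖ := norm_add_le _ _
        _ ≤ R + 1 := by rw [hDnorm]; linarith
    have key1 : u ⬝ᵥ Alim.mulVec u - v ⬝ᵥ Alim.mulVec v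
        = (u - v) ⬝ᵥ Alim.mulVec u + v ⬝ᵥ Alim.mulVec (u - v) := by
      simp only [sub_dotProduct, Matrix.mulVec_sub, dotProduct_sub]
      ring
    have key2 : v ⬝ᵥ Alim.mulVec v - v ⬝ᵥ (A n).mulVec v
        = v ⬝ᵥ (Alim - A n).mulVec v := by
      rw [Matrix.sub_mulVec, dotProduct_sub]
    have b1 := dot_abs_le J Alim (u - v) u
    have b2 := dot_abs_le J Alim v (u - v)
    have b3 := dot_abs_le J (Alim - A n) v v
    have b3' : |v ⬝ᵥ (Alim - A n).mulVec v| ≤ c n * ‖v‖ * ‖v‖ := by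
      have hsum : (∑ i, ∑ j, |(Alim - A n) i j|) = c n := by
        simp [hcdef, Matrix.sub_apply, abs_sub_comm]
      rw [hsum] at b3
      exact b3
    rw [hDnorm] at b1 b2
    have hsplit : u ⬝ᵥ Alim.mulVec u - v ⬝ᵥ (A n).mulVec v
        = ((u - v) ⬝ᵥ Alim.mulVec u + v ⬝ᵥ Alim.mulVec (u - v))
          + v ⬝ᵥ (Alim - A n).mulVec v := by
      rw [← key1, ← key2]; ring
    rw [hsplit]
    refine le_trans (abs_add_le _ _) ?_
    refine le_trans (add_le_add (abs_add_le _ _) le_rfl) ?_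
    have t1 : |(u - v) ⬝ᵥ Alim.mulVec u| ≤ SA * e n * (R + 1) := by
      refine b1.trans ?_
      have : SA * e n * ‖u‖ ≤ SA * e n * (R + 1) :=
        mul_le_mul_of_nonneg_left hunorm (by positivity)
      linarith
    have t2 : |v ⬝ᵥ Alim.mulVec (u - v)| ≤ SA * R * e n := by
      refine b2.trans ?_
      have h9 : SA * ‖v‖ ≤ SA * R := mul_le_mul_of_nonneg_left hv1 hSA0
      have : SA * ‖v‖ * e n ≤ SA * R * e n := mul_le_mul_of_nonneg_right h9 (he0 n)
      linarith
    have t3 : |v ⬝ᵥ (Alim - A n).mulVec v| ≤ c n * R2 := by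
      refine b3'.trans ?_
      have hvv : ‖v‖ * ‖v‖ ≤ R2 := by
        calc ‖v‖ * ‖v‖ = ‖v‖ ^ 2 := (sq _).symm
          _ ≤ R2 := hv2
      calc c n * ‖v‖ * ‖v‖ = c n * (‖v‖ * ‖v‖) := by ring
        _ ≤ c n * R2 := mul_le_mul_of_nonneg_left hvv (hc0 n)
    nlinarith [t1, t2, t3, he0 n, hSA0]
  have hberr : Tendsto (fun n => SA * e n * (2 * R + 1) + c n * R2) atTop (𝓝 0) := by
    have h := ((he.const_mul SA).mul_const (2 * R + 1)).add (hc.mul_const R2)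
    simpa using h
  have h1 : Tendsto (fun n => (xlim - p n) ⬝ᵥ Alim.mulVec (xlim - p n)
      - (x n - p n) ⬝ᵥ (A n).mulVec (x n - p n)) atTop (𝓝 0) := by
    refine squeeze_zero_norm' ?_ hberr
    filter_upwards [herr] with n hn
    simpa [Real.norm_eq_abs] using hn
  have h2 : Tendsto (fun n => (x n - q) ⬝ᵥ (A n).mulVec (x n - q) - Fq) atTop (𝓝 0) := by
    simpa using hfq.sub_const Fq
  set g : ℕ → ℝ := fun n =>
    ((xlim - p n) ⬝ᵥ Alim.mulVec (xlim - p n)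
      - (x n - p n) ⬝ᵥ (A n).mulVec (x n - p n))
    + ((x n - q) ⬝ᵥ (A n).mulVec (x n - q) - Fq) with hgdef
  have hg : Tendsto g atTop (𝓝 0) := by
    simpa only [add_zero] using h1.add h2
  have hsqz : ∀ n, μ / 2 * ‖p n - q‖ ^ 2 ≤ g n := by
    intro n
    have hs := strong_min J Alim K hKconv xlim q hqK hqmin (p n) (hp n).1
    have hcoe := hcoer (p n - q)
    have hfn := (hp n).2 q hqK
    simp only [hgdef, hFqdef]
    nlinarith [hs, hcoe, hfn]
  have hmain : Tendsto (fun n => μ / 2 * ‖p n - q‖ ^ 2) atTop (𝓝 0) := by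
    refine squeeze_zero' ?_ ?_ hg
    · filter_upwards with n; positivity
    · filter_upwards with n; exact hsqz n
  have hnorm2 : Tendsto (fun n => ‖p n - q‖ ^ 2) atTop (𝓝 0) := by
    have h := hmain.const_mul (2 / μ)
    have heq : ∀ n, 2 / μ * (μ / 2 * ‖p n - q‖ ^ 2) = ‖p n - q‖ ^ 2 := by
      intro n; field_simp
    simpa [heq] using h
  have hnorm : Tendsto (fun n => ‖p n - q‖) atTop (𝓝 0) := by
    have h := (Real.continuous_sqrt.tendsto 0).comp hnorm2
    have heq : ∀ n, Real.sqrt (‖p n - q‖ ^ 2) = ‖p n - q‖ := fun n =>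
      Real.sqrt_sq (norm_nonneg _)
    simpa [Function.comp_def, heq] using h
  rw [tendsto_iff_norm_sub_tendsto_zero]
  exact hnorm
end

section
/- Let J be a positive integer, let H ⊆ ℝ^J be nonempty, closed, and convex, let w₀ ∈ H, and let A be a symmetric positive definite J×J real matrix. Let T_{H,w₀} denote the closure of {λ(h − w₀) : h ∈ H, λ ≥ 0}. Then for every x ∈ ℝ^J, (Π_{H,A}(w₀ + t x) − w₀)/t → Π_{T_{H,w₀},A} x as t → 0⁺, where Π_{K,A} z denotes the unique minimizer of (z − λ)ᵀA(z − λ) over λ ∈ K (for K nonempty closed convex). -/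
open Matrix Filter Topology

/-- Symmetry of the bilinear form induced by a symmetric matrix. -/
lemma aux_symm {J : ℕ} (A : Matrix (Fin J) (Fin J) ℝ) (hA : A.IsSymm)
    (u v : Fin J → ℝ) : u ⬝ᵥ A *ᵥ v = v ⬝ᵥ A *ᵥ u := by
  rw [dotProduct_mulVec, ← mulVec_transpose, hA.eq, dotProduct_comm]

/-- Quadratic form of a scalar multiple. -/
lemma aux_Qsmul {J : ℕ} (A : Matrix (Fin J) (Fin J) ℝ) (c : ℝ) (u : Fin J → ℝ) :
    (c • u) ⬝ᵥ A *ᵥ (c • u) = c ^ 2 * (u ⬝ᵥ A *ᵥ u) := by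
  simp [mulVec_smul, smul_dotProduct, dotProduct_smul, smul_eq_mul]; ring

/-- Parallelogram-type identity for the quadratic form of a symmetric matrix. -/
lemma aux_par {J : ℕ} (A : Matrix (Fin J) (Fin J) ℝ) (hA : A.IsSymm)
    (x u v : Fin J → ℝ) :
    (u - v) ⬝ᵥ A *ᵥ (u - v)
      = 2 * ((x - u) ⬝ᵥ A *ᵥ (x - u)) + 2 * ((x - v) ⬝ᵥ A *ᵥ (x - v))
        - 4 * ((x - (2⁻¹ : ℝ) • (u + v)) ⬝ᵥ A *ᵥ (x - (2⁻¹ : ℝ) • (u + v))) := by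
  simp only [sub_dotProduct, dotProduct_sub, mulVec_sub, mulVec_add, mulVec_smul,
    add_dotProduct, dotProduct_add, smul_dotProduct, dotProduct_smul, smul_eq_mul]
  rw [aux_symm A hA u x, aux_symm A hA v x, aux_symm A hA v u]
  ring

/-- A positive definite quadratic form dominates a positive multiple of the
squared (sup) norm. -/
lemma aux_pos {J : ℕ} (hJ : 0 < J) (A : Matrix (Fin J) (Fin J) ℝ) (hApd : A.PosDef) :
    ∃ c₀ : ℝ, 0 < c₀ ∧ ∀ u : Fin J → ℝ, c₀ * ‖u‖ ^ 2 ≤ u ⬝ᵥ A *ᵥ u := by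
  haveI : Nonempty (Fin J) := ⟨⟨0, hJ⟩⟩
  have hQcont : Continuous (fun u : Fin J → ℝ => u ⬝ᵥ A *ᵥ u) :=
    continuous_id.dotProduct (continuous_const.matrix_mulVec continuous_id)
  have hQpos : ∀ u : Fin J → ℝ, u ≠ 0 → 0 < u ⬝ᵥ A *ᵥ u := fun u hu => by
    simpa using (posDef_iff_dotProduct_mulVec.mp hApd).2 hu
  have hne : (Metric.sphere (0 : Fin J → ℝ) 1).Nonempty := by
    refine ⟨fun _ => 1, ?_⟩
    simp [mem_sphere_iff_norm, pi_norm_const]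
  obtain ⟨u₀, hu₀mem, hmin⟩ :=
    (isCompact_sphere (0 : Fin J → ℝ) 1).exists_isMinOn hne hQcont.continuousOn
  have hu₀norm : ‖u₀‖ = 1 := by simpa [mem_sphere_iff_norm] using hu₀mem
  have hu₀ne : u₀ ≠ 0 := by intro h; rw [h] at hu₀norm; simp at hu₀norm
  refine ⟨u₀ ⬝ᵥ A *ᵥ u₀, hQpos u₀ hu₀ne, fun u => ?_⟩
  rcases eq_or_ne u 0 with rfl | hu
  · simp
  · have hr : 0 < ‖u‖ := norm_pos_iff.mpr hu
    have hmem : ‖u‖⁻¹ • u ∈ Metric.sphere (0 : Fin J → ℝ) 1 := by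
      simp [mem_sphere_iff_norm, norm_smul, abs_of_pos (inv_pos.mpr hr),
        inv_mul_cancel₀ hr.ne']
    have hle : u₀ ⬝ᵥ A *ᵥ u₀ ≤ (‖u‖⁻¹ • u) ⬝ᵥ A *ᵥ (‖u‖⁻¹ • u) := hmin hmem
    rw [aux_Qsmul A _ u] at hle
    have h2 : 0 < (‖u‖ : ℝ) ^ 2 := by positivity
    calc (u₀ ⬝ᵥ A *ᵥ u₀) * ‖u‖ ^ 2 ≤ ((‖u‖⁻¹) ^ 2 * (u ⬝ᵥ A *ᵥ u)) * ‖u‖ ^ 2 :=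
          mul_le_mul_of_nonneg_right hle h2.le
      _ = u ⬝ᵥ A *ᵥ u := by field_simp

/-- The cone generated by `H - w₀` is convex. -/
lemma aux_cone_convex {J : ℕ} (H : Set (Fin J → ℝ)) (hHconv : Convex ℝ H)
    (w₀ : Fin J → ℝ) (hw₀ : w₀ ∈ H) :
    Convex ℝ {v : Fin J → ℝ | ∃ h ∈ H, ∃ c : ℝ, 0 ≤ c ∧ v = c • (h - w₀)} := by
  rintro v₁ ⟨h₁, hh₁, c₁, hc₁, rfl⟩ v₂ ⟨h₂, hh₂, c₂, hc₂, rfl⟩ a b ha hb hab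
  by_cases hz : a * c₁ + b * c₂ = 0
  · have h1 : a * c₁ = 0 := by nlinarith [mul_nonneg ha hc₁, mul_nonneg hb hc₂]
    have h2 : b * c₂ = 0 := by nlinarith [mul_nonneg ha hc₁, mul_nonneg hb hc₂]
    refine ⟨w₀, hw₀, 0, le_refl 0, ?_⟩
    rw [smul_smul, smul_smul, h1, h2]; simp
  · have hs : 0 < a * c₁ + b * c₂ := lt_of_le_of_ne
      (by positivity) (Ne.symm hz)
    have hs' : a * c₁ + b * c₂ ≠ 0 := hs.ne'
    refine ⟨((a*c₁+b*c₂)⁻¹ * (a*c₁)) • h₁ + ((a*c₁+b*c₂)⁻¹ * (b*c₂)) • h₂,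
      hHconv hh₁ hh₂ (by positivity) (by positivity) ?_, a*c₁+b*c₂, hs.le, ?_⟩
    · rw [← mul_add, inv_mul_cancel₀ hs']
    · ext i
      simp only [Pi.add_apply, Pi.smul_apply, Pi.sub_apply, smul_eq_mul]
      field_simp
      ring

/-- Strong-convexity estimate: the `A`-squared-distance from the projection is
controlled by the excess of the value of any point of `T`. -/
lemma aux_sq {J : ℕ} (A : Matrix (Fin J) (Fin J) ℝ) (hAsymm : A.IsSymm)
    (T : Set (Fin J → ℝ)) (hTconv : Convex ℝ T)
    (x u p : Fin J → ℝ) (hu : u ∈ T) (hp : p ∈ T)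
    (hmin : ∀ l ∈ T, (x - p) ⬝ᵥ A *ᵥ (x - p) ≤ (x - l) ⬝ᵥ A *ᵥ (x - l)) :
    (u - p) ⬝ᵥ A *ᵥ (u - p)
      ≤ 2 * ((x - u) ⬝ᵥ A *ᵥ (x - u) - (x - p) ⬝ᵥ A *ᵥ (x - p)) := by
  have hmidT : (2⁻¹ : ℝ) • (u + p) ∈ T := by
    have := hTconv hu hp (by norm_num : (0:ℝ) ≤ 2⁻¹) (by norm_num : (0:ℝ) ≤ 2⁻¹)
      (by norm_num)
    simpa [smul_add] using this
  have h1 := hmin _ hmidT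
  have hpar := aux_par A hAsymm x u p
  linarith

/-- Directional differentiability of the `A`-metric projection onto a nonempty
closed convex set `H` at `w₀ ∈ H` (Zarantonello): for every direction `x`,
`(Π_{H,A}(w₀ + t x) − w₀)/t → Π_{T_{H,w₀},A} x` as `t → 0⁺`, where
`T_{H,w₀}` is the closure of `{c(h − w₀) : h ∈ H, c ≥ 0}` and `Π_{K,A} z` is
the unique minimizer of `(z − λ)ᵀA(z − λ)` over `K`, given here via functions
`projH` and `projT` characterized by their minimizing property. -/
theorem metric_projection_directionally_differentiable
    (J : ℕ) (hJ : 0 < J)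
    (H : Set (Fin J → ℝ))
    (hHne : H.Nonempty) (hHcl : IsClosed H) (hHconv : Convex ℝ H)
    (w₀ : Fin J → ℝ) (hw₀ : w₀ ∈ H)
    (A : Matrix (Fin J) (Fin J) ℝ)
    (hAsymm : A.IsSymm) (hApd : A.PosDef)
    (T : Set (Fin J → ℝ))
    (hT : T = closure {v : Fin J → ℝ | ∃ h ∈ H, ∃ c : ℝ, 0 ≤ c ∧ v = c • (h - w₀)})
    (projH : (Fin J → ℝ) → (Fin J → ℝ))
    (hprojH : ∀ z : Fin J → ℝ, projH z ∈ H ∧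
      ∀ l ∈ H, (z - projH z) ⬝ᵥ A.mulVec (z - projH z)
                ≤ (z - l) ⬝ᵥ A.mulVec (z - l))
    (projT : (Fin J → ℝ) → (Fin J → ℝ))
    (hprojT : ∀ z : Fin J → ℝ, projT z ∈ T ∧
      ∀ l ∈ T, (z - projT z) ⬝ᵥ A.mulVec (z - projT z)
                ≤ (z - l) ⬝ᵥ A.mulVec (z - l)) :
    ∀ x : Fin J → ℝ,
      Tendsto (fun t : ℝ => t⁻¹ • (projH (w₀ + t • x) - w₀))
        (𝓝[>] (0 : ℝ)) (𝓝 (projT x)) := by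
  intro x
  obtain ⟨c₀, hc₀, hbound⟩ := aux_pos hJ A hApd
  have hpT : projT x ∈ T := (hprojT x).1
  have hTconv : Convex ℝ T := by
    rw [hT]; exact (aux_cone_convex H hHconv w₀ hw₀).closure
  -- membership of the difference quotient in T
  have hwmemT : ∀ t : ℝ, 0 < t → t⁻¹ • (projH (w₀ + t • x) - w₀) ∈ T := by
    intro t ht
    rw [hT]
    exact subset_closure ⟨projH (w₀ + t • x), (hprojH _).1, t⁻¹,
      (inv_pos.mpr ht).le, rfl⟩
  -- minimality of the difference quotient over the scaled set
  have hmin : ∀ t : ℝ, 0 < t → ∀ h ∈ H,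
      (x - t⁻¹ • (projH (w₀ + t • x) - w₀)) ⬝ᵥ A *ᵥ (x - t⁻¹ • (projH (w₀ + t • x) - w₀))
        ≤ (x - t⁻¹ • (h - w₀)) ⬝ᵥ A *ᵥ (x - t⁻¹ • (h - w₀)) := by
    intro t ht h hh
    have ht' : t ≠ 0 := ht.ne'
    have e0 : ∀ u : Fin J → ℝ, x - t⁻¹ • (u - w₀) = t⁻¹ • ((w₀ + t • x) - u) := by
      intro u; ext i
      simp only [Pi.sub_apply, Pi.smul_apply, Pi.add_apply, smul_eq_mul]
      field_simp; ring
    rw [e0, e0, aux_Qsmul, aux_Qsmul]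
    exact mul_le_mul_of_nonneg_left ((hprojH (w₀ + t • x)).2 h hh) (sq_nonneg t⁻¹)
  -- lower bound by the limiting value
  have hlower : ∀ t : ℝ, 0 < t →
      (x - projT x) ⬝ᵥ A *ᵥ (x - projT x)
        ≤ (x - t⁻¹ • (projH (w₀ + t • x) - w₀)) ⬝ᵥ A *ᵥ
            (x - t⁻¹ • (projH (w₀ + t • x) - w₀)) :=
    fun t ht => (hprojT x).2 _ (hwmemT t ht)
  -- convergence of the optimal values
  have hDlim : Tendsto
      (fun t : ℝ => (x - t⁻¹ • (projH (w₀ + t • x) - w₀)) ⬝ᵥ A *ᵥ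
          (x - t⁻¹ • (projH (w₀ + t • x) - w₀)))
      (𝓝[>] (0:ℝ)) (𝓝 ((x - projT x) ⬝ᵥ A *ᵥ (x - projT x))) := by
    rw [Metric.tendsto_nhdsWithin_nhds]
    intro ε hε
    have hcont : Continuous fun z : Fin J → ℝ => (x - z) ⬝ᵥ A *ᵥ (x - z) :=
      (continuous_const.sub continuous_id).dotProduct
        (continuous_const.matrix_mulVec (continuous_const.sub continuous_id))
    have hU : IsOpen {z : Fin J → ℝ |
        (x - z) ⬝ᵥ A *ᵥ (x - z) < (x - projT x) ⬝ᵥ A *ᵥ (x - projT x) + ε} :=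
      isOpen_lt hcont continuous_const
    have hpU : projT x ∈ {z : Fin J → ℝ |
        (x - z) ⬝ᵥ A *ᵥ (x - z) < (x - projT x) ⬝ᵥ A *ᵥ (x - projT x) + ε} := by
      simp only [Set.mem_setOf_eq]; linarith
    have hpcl : projT x ∈
        closure {v : Fin J → ℝ | ∃ h ∈ H, ∃ c : ℝ, 0 ≤ c ∧ v = c • (h - w₀)} := by
      rw [← hT]; exact hpT
    obtain ⟨y, hyU, hyC⟩ := mem_closure_iff.mp hpcl _ hU hpU
    obtain ⟨h, hh, c, hc, rfl⟩ := hyC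
    refine ⟨(c+1)⁻¹, by positivity, ?_⟩
    intro t htmem hdist
    have ht0 : (0:ℝ) < t := htmem
    have ht' : t ≠ 0 := ht0.ne'
    rw [Real.dist_eq, sub_zero, abs_of_pos ht0] at hdist
    have hc1 : (0:ℝ) < c + 1 := by positivity
    have h1 : t * (c+1) < 1 := by
      have := mul_lt_mul_of_pos_right hdist hc1
      rwa [inv_mul_cancel₀ hc1.ne'] at this
    have htc1 : t * c ≤ 1 := by nlinarith
    have hmemH : (t*c) • h + (1 - t*c) • w₀ ∈ H :=
      hHconv hh hw₀ (mul_nonneg ht0.le hc) (by linarith) (by ring)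
    have hkey := hmin t ht0 _ hmemH
    have e2 : t⁻¹ • (((t*c) • h + (1 - t*c) • w₀) - w₀) = c • (h - w₀) := by
      ext i
      simp only [Pi.sub_apply, Pi.smul_apply, Pi.add_apply, smul_eq_mul]
      field_simp; ring
    rw [e2] at hkey
    have hlow := hlower t ht0
    have hyU' : (x - c • (h - w₀)) ⬝ᵥ A *ᵥ (x - c • (h - w₀))
        < (x - projT x) ⬝ᵥ A *ᵥ (x - projT x) + ε := hyU
    simp only [Real.dist_eq]
    rw [abs_lt]
    constructor <;> [linarith; linarith]
  -- conclude via strong convexity + squeeze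
  rw [tendsto_iff_norm_sub_tendsto_zero]
  have hsqle : ∀ t : ℝ, 0 < t →
      ‖t⁻¹ • (projH (w₀ + t • x) - w₀) - projT x‖ ≤
        Real.sqrt ((2 / c₀) *
          ((x - t⁻¹ • (projH (w₀ + t • x) - w₀)) ⬝ᵥ A *ᵥ
              (x - t⁻¹ • (projH (w₀ + t • x) - w₀))
            - (x - projT x) ⬝ᵥ A *ᵥ (x - projT x))) := by
    intro t ht
    have key := le_trans
      (hbound (t⁻¹ • (projH (w₀ + t • x) - w₀) - projT x))
      (aux_sq A hAsymm T hTconv x (t⁻¹ • (projH (w₀ + t • x) - w₀)) (projT x)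
        (hwmemT t ht) hpT (hprojT x).2)
    have hnonneg : (0:ℝ) ≤ (2 / c₀) *
        ((x - t⁻¹ • (projH (w₀ + t • x) - w₀)) ⬝ᵥ A *ᵥ
            (x - t⁻¹ • (projH (w₀ + t • x) - w₀))
          - (x - projT x) ⬝ᵥ A *ᵥ (x - projT x)) := by
      have := hlower t ht
      have h2 : (0:ℝ) ≤ 2 / c₀ := by positivity
      nlinarith
    rw [Real.le_sqrt (norm_nonneg _) hnonneg]
    rw [div_mul_eq_mul_div, le_div_iff₀ hc₀]
    nlinarith [key]
  have h2 : Tendsto (fun t : ℝ => (2 / c₀) *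
      ((x - t⁻¹ • (projH (w₀ + t • x) - w₀)) ⬝ᵥ A *ᵥ
          (x - t⁻¹ • (projH (w₀ + t • x) - w₀))
        - (x - projT x) ⬝ᵥ A *ᵥ (x - projT x)))
      (𝓝[>] (0:ℝ)) (𝓝 0) := by
    have := Tendsto.const_mul (2 / c₀)
      (hDlim.sub_const ((x - projT x) ⬝ᵥ A *ᵥ (x - projT x)))
    simpa using this
  have h3 : Tendsto (fun t : ℝ => Real.sqrt ((2 / c₀) *
      ((x - t⁻¹ • (projH (w₀ + t • x) - w₀)) ⬝ᵥ A *ᵥ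
          (x - t⁻¹ • (projH (w₀ + t • x) - w₀))
        - (x - projT x) ⬝ᵥ A *ᵥ (x - projT x))))
      (𝓝[>] (0:ℝ)) (𝓝 0) := by
    have := (Real.continuous_sqrt.tendsto 0).comp h2
    simpa [Real.sqrt_zero, Function.comp_def] using this
  exact squeeze_zero' (Eventually.of_forall fun t => norm_nonneg _)
    (eventually_mem_nhdsWithin.mono fun t ht => hsqle t ht) h3
end

section
/- Let H ⊆ ℝ^J be nonempty, closed, and convex with w₀ ∈ H, let A be a symmetric positive definite J×J real matrix, and let (c_n) be a sequence of positive reals with c_n → ∞. Set K_n := {c_n (h − w₀) : h ∈ H} and let T_{H,w₀} be the closure of {λ(h − w₀) : h ∈ H, λ ≥ 0}. Then for every x ∈ ℝ^J, Π_{K_n,A} x → Π_{T_{H,w₀},A} x as n → ∞, where Π_{K,A} z denotes the unique minimizer of (z − λ)ᵀA(z − λ) over λ ∈ K (each K_n is nonempty, closed, and convex). -/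
open Matrix Filter Topology

noncomputable def quadQ {J : ℕ} (A : Matrix (Fin J) (Fin J) ℝ) (v : Fin J → ℝ) : ℝ :=
  v ⬝ᵥ A.mulVec v

variable {J : ℕ} {A : Matrix (Fin J) (Fin J) ℝ}

lemma quadQ_pos (hApd : A.PosDef) {v : Fin J → ℝ} (hv : v ≠ 0) : 0 < quadQ A v := by
  simpa [quadQ] using hApd.dotProduct_mulVec_pos hv

lemma quadQ_nonneg (hApd : A.PosDef) (v : Fin J → ℝ) : 0 ≤ quadQ A v := by
  rcases eq_or_ne v 0 with rfl | hv
  · simp [quadQ]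
  · exact (quadQ_pos hApd hv).le

lemma dotA_symm (hAsymm : A.IsSymm) (u v : Fin J → ℝ) :
    u ⬝ᵥ A.mulVec v = v ⬝ᵥ A.mulVec u := by
  rw [dotProduct_mulVec, ← mulVec_transpose, hAsymm.eq, dotProduct_comm]

lemma quadQ_add (hAsymm : A.IsSymm) (u v : Fin J → ℝ) :
    quadQ A (u + v) = quadQ A u + quadQ A v + 2 * (u ⬝ᵥ A.mulVec v) := by
  simp only [quadQ, mulVec_add, add_dotProduct, dotProduct_add]
  rw [dotA_symm hAsymm v u]; ring

lemma quadQ_sub (hAsymm : A.IsSymm) (u v : Fin J → ℝ) :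
    quadQ A (u - v) = quadQ A u + quadQ A v - 2 * (u ⬝ᵥ A.mulVec v) := by
  simp only [quadQ, mulVec_sub, sub_dotProduct, dotProduct_sub]
  rw [dotA_symm hAsymm v u]; ring

lemma quadQ_smul (s : ℝ) (v : Fin J → ℝ) : quadQ A (s • v) = s ^ 2 * quadQ A v := by
  simp only [quadQ, mulVec_smul, smul_dotProduct, dotProduct_smul, smul_eq_mul]
  ring

lemma quadQ_continuous : Continuous (quadQ A) :=
  continuous_id.dotProduct (continuous_const.matrix_mulVec continuous_id)

lemma quadQ_coercive (hJ : 0 < J) (hApd : A.PosDef) :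
    ∃ m : ℝ, 0 < m ∧ ∀ v : Fin J → ℝ, m * ‖v‖ ^ 2 ≤ quadQ A v := by
  have hne : (Metric.sphere (0 : Fin J → ℝ) 1).Nonempty := by
    refine ⟨fun _ => 1, ?_⟩
    have : Nonempty (Fin J) := ⟨⟨0, hJ⟩⟩
    simp [Metric.mem_sphere, dist_zero_right]
  obtain ⟨v₀, hv₀S, hv₀min⟩ :=
    (isCompact_sphere (0 : Fin J → ℝ) 1).exists_isMinOn hne quadQ_continuous.continuousOn
  have hv₀norm : ‖v₀‖ = 1 := by simpa using hv₀S
  have hv₀ne : v₀ ≠ 0 := by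
    intro h; rw [h] at hv₀norm; simp at hv₀norm
  refine ⟨quadQ A v₀, quadQ_pos hApd hv₀ne, ?_⟩
  intro v
  rcases eq_or_ne v 0 with rfl | hv
  · simp [quadQ]
  · have hn : (0:ℝ) < ‖v‖ := norm_pos_iff.2 hv
    have hu : (‖v‖⁻¹ • v) ∈ Metric.sphere (0 : Fin J → ℝ) 1 := by
      simp [norm_smul, abs_of_pos (inv_pos.2 hn), inv_mul_cancel₀ hn.ne']
    have hmin : quadQ A v₀ ≤ quadQ A (‖v‖⁻¹ • v) := hv₀min hu
    rw [quadQ_smul] at hmin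
    have h2 : ‖v‖⁻¹ ^ 2 * quadQ A v = quadQ A v / ‖v‖ ^ 2 := by
      field_simp
    rw [h2, le_div_iff₀ (by positivity)] at hmin
    linarith [hmin]

/-- Projections onto the rescaled constraint sets `Kₙ = cₙ(H − w₀)` with
`cₙ → ∞` converge to the projection onto the tangent cone
`T_{H,w₀} = closure {c(h − w₀) : h ∈ H, c ≥ 0}`: if `pₙ` is the unique
minimizer of `(x − λ)ᵀA(x − λ)` over `Kₙ` and `q` the unique minimizer over
`T_{H,w₀}`, then `pₙ → q`. -/
theorem rescaled_projection_tendsto_tangent_cone_projection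
    (J : ℕ) (hJ : 0 < J)
    (H : Set (Fin J → ℝ))
    (hHne : H.Nonempty) (hHcl : IsClosed H) (hHconv : Convex ℝ H)
    (w₀ : Fin J → ℝ) (hw₀ : w₀ ∈ H)
    (A : Matrix (Fin J) (Fin J) ℝ)
    (hAsymm : A.IsSymm) (hApd : A.PosDef)
    (c : ℕ → ℝ) (hcpos : ∀ n, 0 < c n) (hc : Tendsto c atTop atTop)
    (K : ℕ → Set (Fin J → ℝ))
    (hK : ∀ n, K n = (fun h : Fin J → ℝ => c n • (h - w₀)) '' H)
    (T : Set (Fin J → ℝ))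
    (hT : T = closure {v : Fin J → ℝ | ∃ h ∈ H, ∃ l : ℝ, 0 ≤ l ∧ v = l • (h - w₀)})
    (x : Fin J → ℝ)
    (p : ℕ → Fin J → ℝ)
    (hp : ∀ n, p n ∈ K n ∧
      ∀ l ∈ K n, (x - p n) ⬝ᵥ A.mulVec (x - p n) ≤ (x - l) ⬝ᵥ A.mulVec (x - l))
    (q : Fin J → ℝ)
    (hq : q ∈ T ∧
      ∀ l ∈ T, (x - q) ⬝ᵥ A.mulVec (x - q) ≤ (x - l) ⬝ᵥ A.mulVec (x - l)) :
    Tendsto p atTop (𝓝 q) := by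
  obtain ⟨m, hm, hmle⟩ := quadQ_coercive (A := A) hJ hApd
  set S : Set (Fin J → ℝ) := {v : Fin J → ℝ | ∃ h ∈ H, ∃ l : ℝ, 0 ≤ l ∧ v = l • (h - w₀)}
    with hSdef
  have hSconv : Convex ℝ S := by
    rintro v₁ ⟨h₁, hh₁, l₁, hl₁, rfl⟩ v₂ ⟨h₂, hh₂, l₂, hl₂, rfl⟩ a b ha hb hab
    rcases eq_or_lt_of_le (add_nonneg (mul_nonneg ha hl₁) (mul_nonneg hb hl₂)) with hs | hs
    · have h1 : a * l₁ = 0 := by nlinarith [mul_nonneg ha hl₁, mul_nonneg hb hl₂]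
      have h2 : b * l₂ = 0 := by nlinarith [mul_nonneg ha hl₁, mul_nonneg hb hl₂]
      refine ⟨w₀, hw₀, 0, le_refl 0, ?_⟩
      funext i
      simp only [Pi.add_apply, Pi.smul_apply, Pi.sub_apply, smul_eq_mul]
      linear_combination (h₁ i - w₀ i) * h1 + (h₂ i - w₀ i) * h2
    · refine ⟨(a * l₁ / (a * l₁ + b * l₂)) • h₁ + (b * l₂ / (a * l₁ + b * l₂)) • h₂,
        hHconv hh₁ hh₂ (div_nonneg (mul_nonneg ha hl₁) hs.le)
          (div_nonneg (mul_nonneg hb hl₂) hs.le) (by field_simp),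
        a * l₁ + b * l₂, hs.le, ?_⟩
      funext i
      simp only [Pi.add_apply, Pi.smul_apply, Pi.sub_apply, smul_eq_mul]
      field_simp
      ring
  have hTconv : Convex ℝ T := by rw [hT]; exact hSconv.closure
  have hKS : ∀ n, K n ⊆ S := by
    intro n v hv
    rw [hK n] at hv
    obtain ⟨h, hh, rfl⟩ := hv
    exact ⟨h, hh, c n, (hcpos n).le, rfl⟩
  have hST : S ⊆ T := by rw [hT]; exact subset_closure
  have hpT : ∀ n, p n ∈ T := fun n => hST (hKS n (hp n).1)
  have hd' : ∀ n, quadQ A (x - q) ≤ quadQ A (x - p n) := fun n => hq.2 (p n) (hpT n)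
  have hdiff : Tendsto (fun n => quadQ A (x - p n) - quadQ A (x - q)) atTop (𝓝 0) := by
    rw [Metric.tendsto_atTop]
    intro ε hε
    have hcont : Continuous fun v : Fin J → ℝ => quadQ A (x - v) :=
      quadQ_continuous.comp (continuous_const.sub continuous_id)
    have hopen : IsOpen {v : Fin J → ℝ | quadQ A (x - v) < quadQ A (x - q) + ε} :=
      isOpen_lt hcont continuous_const
    have hqmem : q ∈ {v : Fin J → ℝ | quadQ A (x - v) < quadQ A (x - q) + ε} := by
      simp only [Set.mem_setOf_eq]; linarith
    have hqcl : q ∈ closure S := by rw [← hT]; exact hq.1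
    obtain ⟨v, hvo, hvS⟩ := mem_closure_iff.1 hqcl _ hopen hqmem
    obtain ⟨h, hh, l, hl, rfl⟩ := hvS
    obtain ⟨N, hN⟩ := eventually_atTop.1 (hc.eventually_ge_atTop l)
    refine ⟨N, fun n hn => ?_⟩
    have hcn : l ≤ c n := hN n hn
    have hc0 : c n ≠ 0 := (hcpos n).ne'
    have hmem : l • (h - w₀) ∈ K n := by
      rw [hK n]
      have ht0 : 0 ≤ l / c n := div_nonneg hl (hcpos n).le
      have ht1 : l / c n ≤ 1 := (div_le_one (hcpos n)).2 hcn
      refine ⟨(1 - l / c n) • w₀ + (l / c n) • h,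
        hHconv hw₀ hh (by linarith) ht0 (by ring), ?_⟩
      funext i
      simp only [Pi.add_apply, Pi.smul_apply, Pi.sub_apply, smul_eq_mul]
      field_simp
      ring
    have h1 : quadQ A (x - p n) ≤ quadQ A (x - l • (h - w₀)) := (hp n).2 _ hmem
    have h2 := hd' n
    have h3 : quadQ A (x - l • (h - w₀)) < quadQ A (x - q) + ε := hvo
    rw [Real.dist_eq, abs_of_nonneg (by linarith)]
    linarith
  have hsq : ∀ n, quadQ A (p n - q) ≤ 2 * (quadQ A (x - p n) - quadQ A (x - q)) := by
    intro n
    have hmid : (1/2 : ℝ) • p n + (1/2 : ℝ) • q ∈ T :=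
      hTconv (hpT n) hq.1 (by norm_num) (by norm_num) (by norm_num)
    have hle : quadQ A (x - q) ≤ quadQ A (x - ((1/2 : ℝ) • p n + (1/2 : ℝ) • q)) :=
      hq.2 _ hmid
    have e0 : x - ((1/2 : ℝ) • p n + (1/2 : ℝ) • q)
        = (1/2 : ℝ) • ((x - p n) + (x - q)) := by
      funext i
      simp only [Pi.add_apply, Pi.smul_apply, Pi.sub_apply, smul_eq_mul]
      ring
    have e1 : p n - q = (x - q) - (x - p n) := by
      funext i
      simp only [Pi.sub_apply]
      ring
    rw [e0, quadQ_smul, quadQ_add hAsymm] at hle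
    rw [e1, quadQ_sub hAsymm, dotA_symm hAsymm (x - q) (x - p n)]
    nlinarith [hle]
  have hQ0 : Tendsto (fun n => quadQ A (p n - q)) atTop (𝓝 0) := by
    have hbnd : Tendsto (fun n => 2 * (quadQ A (x - p n) - quadQ A (x - q))) atTop (𝓝 0) := by
      simpa using hdiff.const_mul 2
    exact squeeze_zero (fun n => quadQ_nonneg hApd _) hsq hbnd
  have hn2 : Tendsto (fun n => ‖p n - q‖ ^ 2) atTop (𝓝 0) := by
    have hbnd : Tendsto (fun n => quadQ A (p n - q) / m) atTop (𝓝 0) := by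
      simpa using hQ0.div_const m
    refine squeeze_zero (fun n => sq_nonneg _) (fun n => ?_) hbnd
    rw [le_div_iff₀ hm]
    linarith [hmle (p n - q)]
  have hn1 : Tendsto (fun n => ‖p n - q‖) atTop (𝓝 0) := by
    have := hn2.sqrt
    simpa [Real.sqrt_sq (norm_nonneg _)] using this
  rw [tendsto_iff_norm_sub_tendsto_zero]
  exact hn1
end
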